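/- Let (φₙ)_{n ≥ 1} be any family of order-n grid enumerations such that for every n, any two consecutive cells φₙ(j), φₙ(j+1) are king-adjacent, and the nesting condition holds: for all j < 4^{n+1}, integer division of both coordinates of φ_{n+1}(j) by 2 yields φₙ(⌊j/4⌋). Then every function f : [0,1] → ℝ² satisfying, for all n and all j < 4^n, f([j/4^n, (j+1)/4^n]) ⊆ S(n, φₙ(j)), obeys the Hölder condition of exponent 1/2: for all s, t ∈ [0,1], ‖f(t) − f(s)‖ ≤ 6·|t − s|^{1/2} (Euclidean norm on ℝ²). In particular every such curve has finite dilation factor sup_{t ≠ s} ‖f(t) − f(s)‖²/|t − s|, so locality is preserved in the Hölder sense for all HHC and HHCK curves. -/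

import Mathlib

/-- An order-`n` grid enumeration: a bijection between `Fin (4^n)` and the cells of the
`2^n × 2^n` grid; cell `(a,b)` represents the subsquare with lower-left corner
`(a/2^n, b/2^n)`. -/
abbrev GridEnum (n : ℕ) := Fin (4 ^ n) ≃ Fin (2 ^ n) × Fin (2 ^ n)

/-- Two grid cells are edge-adjacent if their coordinates (as integers) satisfy
`|a − a'| + |b − b'| = 1`. -/
def edgeAdj {m : ℕ} (c d : Fin m × Fin m) : Prop :=
  |((c.1 : ℕ) : ℤ) - ((d.1 : ℕ) : ℤ)| + |((c.2 : ℕ) : ℤ) - ((d.2 : ℕ) : ℤ)| = 1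

/-- Two grid cells are king-adjacent if their coordinates (as integers) satisfy
`max (|a − a'|) (|b − b'|) = 1`. -/
def kingAdj {m : ℕ} (c d : Fin m × Fin m) : Prop :=
  max |((c.1 : ℕ) : ℤ) - ((d.1 : ℕ) : ℤ)| |((c.2 : ℕ) : ℤ) - ((d.2 : ℕ) : ℤ)| = 1

/-- Adjacency condition: any two consecutive cells of the enumeration are edge-adjacent. -/
def ConsecEdgeAdj {n : ℕ} (φ : GridEnum n) : Prop :=
  ∀ (j : ℕ) (h : j + 1 < 4 ^ n), edgeAdj (φ ⟨j, Nat.lt_of_succ_lt h⟩) (φ ⟨j + 1, h⟩)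

/-- Any two consecutive cells of the enumeration are king-adjacent. -/
def ConsecKingAdj {n : ℕ} (φ : GridEnum n) : Prop :=
  ∀ (j : ℕ) (h : j + 1 < 4 ^ n), kingAdj (φ ⟨j, Nat.lt_of_succ_lt h⟩) (φ ⟨j + 1, h⟩)

/-- Endpoint condition: the enumeration starts at the lower-left cell `(0,0)` and ends
at the lower-right cell `(2^n − 1, 0)`. -/
def EndpointCond {n : ℕ} (φ : GridEnum n) : Prop :=
  φ ⟨0, by positivity⟩ = (⟨0, by positivity⟩, ⟨0, by positivity⟩) ∧
  φ ⟨4 ^ n - 1, Nat.sub_lt (by positivity) Nat.one_pos⟩ =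
    (⟨2 ^ n - 1, Nat.sub_lt (by positivity) Nat.one_pos⟩, ⟨0, by positivity⟩)

/-- Nesting condition: integer division of both coordinates of `φₙ₊₁ j` by 2 yields
`φₙ ⌊j/4⌋`. -/
def Nests {n : ℕ} (φn : GridEnum n) (φn1 : GridEnum (n + 1)) : Prop :=
  ∀ j : Fin (4 ^ (n + 1)),
    ((φn1 j).1 : ℕ) / 2 =
      ((φn ⟨(j : ℕ) / 4, by
        have hj : (j : ℕ) < 4 ^ n * 4 := by simpa [pow_succ] using j.isLt
        omega⟩).1 : ℕ) ∧
    ((φn1 j).2 : ℕ) / 2 =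
      ((φn ⟨(j : ℕ) / 4, by
        have hj : (j : ℕ) < 4 ^ n * 4 := by simpa [pow_succ] using j.isLt
        omega⟩).2 : ℕ)

/-- The subsquare `[a/2^n, (a+1)/2^n] × [b/2^n, (b+1)/2^n]` in the Euclidean plane
associated to the grid cell `(a,b)` at order `n`. -/
def subSquare (n : ℕ) (c : Fin (2 ^ n) × Fin (2 ^ n)) : Set (EuclideanSpace ℝ (Fin 2)) :=
  {p | p 0 ∈ Set.Icc (((c.1 : ℕ) : ℝ) / 2 ^ n) ((((c.1 : ℕ) : ℝ) + 1) / 2 ^ n) ∧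
       p 1 ∈ Set.Icc (((c.2 : ℕ) : ℝ) / 2 ^ n) ((((c.2 : ℕ) : ℝ) + 1) / 2 ^ n)}

lemma abs_sub_le_of_mem' {e x y a b : ℝ} (he : 0 < e) (hx : x ∈ Set.Icc (a/e) ((a+1)/e))
    (hy : y ∈ Set.Icc (b/e) ((b+1)/e)) (hab : |a - b| ≤ 1) : |x - y| ≤ 2/e := by
  obtain ⟨hx1, hx2⟩ := hx
  obtain ⟨hy1, hy2⟩ := hy
  rw [abs_le] at hab
  have h1 : a ≤ x * e := (div_le_iff₀ he).mp hx1
  have h2 : x * e ≤ a + 1 := (le_div_iff₀ he).mp hx2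
  have h3 : b ≤ y * e := (div_le_iff₀ he).mp hy1
  have h4 : y * e ≤ b + 1 := (le_div_iff₀ he).mp hy2
  rw [abs_sub_le_iff]
  constructor
  · rw [le_div_iff₀ he]
    have : (x - y) * e = x * e - y * e := by ring
    rw [this]; linarith
  · rw [le_div_iff₀ he]
    have : (y - x) * e = y * e - x * e := by ring
    rw [this]; linarith

lemma enorm_le' {v : EuclideanSpace ℝ (Fin 2)} {r : ℝ} (h0 : |v 0| ≤ r) (h1 : |v 1| ≤ r) :
    ‖v‖ ≤ r * Real.sqrt 2 := by
  have hr : 0 ≤ r := (abs_nonneg _).trans h0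
  rw [EuclideanSpace.norm_eq, Fin.sum_univ_two]
  have hb : ‖v 0‖^2 + ‖v 1‖^2 ≤ 2 * r^2 := by
    rw [Real.norm_eq_abs, Real.norm_eq_abs]
    nlinarith [abs_nonneg (v 0), abs_nonneg (v 1)]
  calc Real.sqrt (‖v 0‖^2 + ‖v 1‖^2) ≤ Real.sqrt (2*r^2) := Real.sqrt_le_sqrt hb
    _ = r * Real.sqrt 2 := by
        rw [Real.sqrt_mul (by norm_num : (0:ℝ) ≤ 2), Real.sqrt_sq hr, mul_comm]

noncomputable def jdx (n : ℕ) (s : ℝ) : ℕ := min ⌊s * (4:ℝ) ^ n⌋₊ (4 ^ n - 1)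

lemma jdx_lt (n : ℕ) (s : ℝ) : jdx n s < 4 ^ n := by
  have : 0 < 4 ^ n := Nat.pow_pos (by norm_num)
  unfold jdx; omega

lemma jdx_le {s : ℝ} (n : ℕ) (hs : 0 ≤ s) : (jdx n s : ℝ) ≤ s * 4 ^ n := by
  have h0 : jdx n s ≤ ⌊s * (4:ℝ) ^ n⌋₊ := min_le_left _ _
  have h1 : (jdx n s : ℝ) ≤ (⌊s * (4:ℝ) ^ n⌋₊ : ℝ) := by exact_mod_cast h0
  exact h1.trans (Nat.floor_le (by positivity))

lemma le_jdx {s : ℝ} (n : ℕ) (hs : s ≤ 1) : s * 4 ^ n ≤ (jdx n s : ℝ) + 1 := by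
  rcases le_or_gt ⌊s * (4:ℝ) ^ n⌋₊ (4 ^ n - 1) with h | h
  · have : jdx n s = ⌊s * (4:ℝ) ^ n⌋₊ := min_eq_left h
    rw [this]
    exact (Nat.lt_floor_add_one _).le
  · have hM : 0 < 4 ^ n := Nat.pow_pos (by norm_num)
    have : jdx n s = 4 ^ n - 1 := min_eq_right (by omega)
    rw [this]
    have hc : ((4 ^ n - 1 : ℕ) : ℝ) + 1 = (4 : ℝ) ^ n := by
      push_cast [Nat.cast_sub hM]; ring
    rw [hc]
    have : (0:ℝ) < 4 ^ n := by positivity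
    nlinarith

lemma jdx_mono {s t : ℝ} (n : ℕ) (hst : s ≤ t) : jdx n s ≤ jdx n t := by
  unfold jdx
  have : ⌊s * (4:ℝ) ^ n⌋₊ ≤ ⌊t * (4:ℝ) ^ n⌋₊ :=
    Nat.floor_le_floor (by nlinarith [pow_pos (show (0:ℝ) < 4 by norm_num) n])
  omega

lemma jdx_succ {s t : ℝ} (n : ℕ) (h : t - s ≤ 1 / 4 ^ n) :
    jdx n t ≤ jdx n s + 1 := by
  have h4 : (0:ℝ) < 4 ^ n := by positivity
  have key : t * 4 ^ n < (⌊s * (4:ℝ) ^ n⌋₊ : ℝ) + 2 := by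
    have h1 : s * (4:ℝ) ^ n < ⌊s * (4:ℝ) ^ n⌋₊ + 1 := Nat.lt_floor_add_one _
    have h2 : t * 4 ^ n ≤ s * 4 ^ n + 1 := by
      have hm := mul_le_mul_of_nonneg_right h h4.le
      rw [sub_mul, one_div_mul_cancel (ne_of_gt h4)] at hm
      linarith
    linarith
  have hfl : ⌊t * (4:ℝ) ^ n⌋₊ < ⌊s * (4:ℝ) ^ n⌋₊ + 2 := by
    rcases le_or_gt 0 (t * (4:ℝ) ^ n) with h0 | h0
    · exact (Nat.floor_lt h0).mpr (by push_cast; linarith)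
    · rw [Nat.floor_of_nonpos h0.le]; omega
  unfold jdx; omega

lemma sq_dist {n : ℕ} {c d : Fin (2 ^ n) × Fin (2 ^ n)} {p q : EuclideanSpace ℝ (Fin 2)}
    (hp : p ∈ subSquare n c) (hq : q ∈ subSquare n d)
    (h1 : |((c.1 : ℕ) : ℤ) - ((d.1 : ℕ) : ℤ)| ≤ 1)
    (h2 : |((c.2 : ℕ) : ℤ) - ((d.2 : ℕ) : ℤ)| ≤ 1) :
    ‖p - q‖ ≤ 2 / 2 ^ n * Real.sqrt 2 := by
  have he : (0:ℝ) < 2 ^ n := by positivity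
  have ha : |((c.1 : ℕ) : ℝ) - ((d.1 : ℕ) : ℝ)| ≤ 1 := by exact_mod_cast h1
  have hb : |((c.2 : ℕ) : ℝ) - ((d.2 : ℕ) : ℝ)| ≤ 1 := by exact_mod_cast h2
  have e0 := abs_sub_le_of_mem' he hp.1 hq.1 ha
  have e1 := abs_sub_le_of_mem' he hp.2 hq.2 hb
  have hv0 : (p - q) 0 = p 0 - q 0 := rfl
  have hv1 : (p - q) 1 = p 1 - q 1 := rfl
  exact enorm_le' (by rw [hv0]; exact e0) (by rw [hv1]; exact e1)


/-- Any function on `[0,1]` compatible with a nested king-adjacent family of grid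
enumerations (carrying each subinterval `[j/4^n, (j+1)/4^n]` into the subsquare
`S(n, φₙ j)`) obeys the Hölder condition of exponent `1/2` with constant `6`
(Euclidean norm); in particular its dilation factor is finite, so locality is
preserved in the Hölder sense for all HHC and HHCK curves. -/
theorem nested_family_holder
    (φ : ∀ n : ℕ, GridEnum n)
    (hadj : ∀ n : ℕ, 1 ≤ n → ConsecKingAdj (φ n))
    (hnest : ∀ n : ℕ, 1 ≤ n → Nests (φ n) (φ (n + 1)))
    (f : ℝ → EuclideanSpace ℝ (Fin 2))
    (hf : ∀ n : ℕ, 1 ≤ n → ∀ j : Fin (4 ^ n),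
      f '' Set.Icc (((j : ℕ) : ℝ) / 4 ^ n) ((((j : ℕ) : ℝ) + 1) / 4 ^ n) ⊆
        subSquare n (φ n j)) :
    ∀ s ∈ Set.Icc (0 : ℝ) 1, ∀ t ∈ Set.Icc (0 : ℝ) 1,
      ‖f t - f s‖ ≤ 6 * Real.sqrt |t - s| := by
  have hmem : ∀ n : ℕ, 1 ≤ n → ∀ s ∈ Set.Icc (0:ℝ) 1,
      f s ∈ subSquare n (φ n ⟨jdx n s, jdx_lt n s⟩) := by
    intro n hn s hs
    apply hf n hn ⟨jdx n s, jdx_lt n s⟩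
    refine Set.mem_image_of_mem f ⟨?_, ?_⟩
    · rw [div_le_iff₀ (by positivity : (0:ℝ) < 4 ^ n)]
      exact jdx_le n hs.1
    · rw [le_div_iff₀ (by positivity : (0:ℝ) < 4 ^ n)]
      exact le_jdx n hs.2
  have hrt2 : Real.sqrt 2 ≤ 3/2 := by
    nlinarith [Real.sq_sqrt (show (0:ℝ) ≤ 2 by norm_num), Real.sqrt_nonneg 2]
  suffices key : ∀ s ∈ Set.Icc (0:ℝ) 1, ∀ t ∈ Set.Icc (0:ℝ) 1, s ≤ t →
      ‖f t - f s‖ ≤ 6 * Real.sqrt |t - s| by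
    intro s hs t ht
    rcases le_total s t with h | h
    · exact key s hs t ht h
    · rw [norm_sub_rev, abs_sub_comm]
      exact key t ht s hs h
  intro s hs t ht hst
  rw [abs_of_nonneg (by linarith : (0:ℝ) ≤ t - s)]
  rcases eq_or_lt_of_le hst with rfl | hlt
  · simp
  have hpos : (0:ℝ) < t - s := by linarith
  -- core estimate
  have core : ∀ n : ℕ, 1 ≤ n → t - s ≤ 1 / 4 ^ n →
      ‖f t - f s‖ ≤ 2 / 2 ^ n * Real.sqrt 2 := by
    intro n hn hsmall
    have h1 := jdx_mono n hst
    have h2 := jdx_succ n hsmall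
    have hps := hmem n hn s hs
    have hpt := hmem n hn t ht
    rcases eq_or_lt_of_le h1 with heq | hlt2
    · have hfe : (⟨jdx n t, jdx_lt n t⟩ : Fin (4^n)) = ⟨jdx n s, jdx_lt n s⟩ :=
        Fin.ext heq.symm
      rw [hfe] at hpt
      exact sq_dist hpt hps (by simp) (by simp)
    · have hjt : jdx n t = jdx n s + 1 := by omega
      have hlt' : jdx n s + 1 < 4 ^ n := hjt ▸ jdx_lt n t
      have hk : max |(((φ n ⟨jdx n s, Nat.lt_of_succ_lt hlt'⟩).1 : ℕ) : ℤ) -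
            (((φ n ⟨jdx n s + 1, hlt'⟩).1 : ℕ) : ℤ)|
          |(((φ n ⟨jdx n s, Nat.lt_of_succ_lt hlt'⟩).2 : ℕ) : ℤ) -
            (((φ n ⟨jdx n s + 1, hlt'⟩).2 : ℕ) : ℤ)| = 1 :=
        hadj n hn (jdx n s) hlt'
      have hfe : (⟨jdx n t, jdx_lt n t⟩ : Fin (4^n)) = ⟨jdx n s + 1, hlt'⟩ := Fin.ext hjt
      rw [hfe] at hpt
      have hfe2 : (⟨jdx n s, jdx_lt n s⟩ : Fin (4^n)) =
          ⟨jdx n s, Nat.lt_of_succ_lt hlt'⟩ := rfl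
      rw [hfe2] at hps
      refine sq_dist hpt hps ?_ ?_
      · rw [abs_sub_comm]
        exact hk ▸ le_max_left _ _
      · rw [abs_sub_comm]
        exact hk ▸ le_max_right _ _
  rcases le_or_gt (t - s) (1/4 : ℝ) with hsm | hbig
  · -- choose scale
    obtain ⟨m, hm⟩ : ∃ m : ℕ, ((1:ℝ)/4) ^ m < t - s := by
      refine exists_pow_lt_of_lt_one hpos (by norm_num)
    have hex : ∃ m : ℕ, ((1:ℝ)/4) ^ m < t - s := ⟨m, hm⟩
    set m0 := Nat.find hex with hm0def
    have hm0 : ((1:ℝ)/4) ^ m0 < t - s := Nat.find_spec hex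
    have hle1 : t - s ≤ 1 := by
      have := ht.2; have := hs.1; linarith
    have hm2 : 2 ≤ m0 := by
      by_contra hc
      push_neg at hc
      have hge : ((1:ℝ)/4) ^ m0 ≥ 1/4 := by
        interval_cases m0 <;> norm_num
      linarith
    set n := m0 - 1 with hndef
    have hn : 1 ≤ n := by omega
    have hnsucc : n + 1 = m0 := by omega
    have hub : t - s ≤ ((1:ℝ)/4) ^ n := by
      have := Nat.find_min hex (show n < m0 by omega)
      linarith [not_lt.mp this]
    have hpow : ((1:ℝ)/4) ^ n = 1 / 4 ^ n := by
      rw [div_pow, one_pow]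
    have hcore := core n hn (by rw [← hpow]; exact hub)
    have hsq : (1:ℝ)/2^(n+1) ≤ Real.sqrt (t - s) := by
      have ha : ((1:ℝ)/4)^(n+1) ≤ t - s := by rw [hnsucc]; linarith
      have hb : Real.sqrt (((1:ℝ)/4)^(n+1)) = 1/2^(n+1) := by
        rw [show (1:ℝ)/4 = ((1:ℝ)/2)^2 by norm_num, ← pow_mul,
          show 2*(n+1) = (n+1)*2 by ring, pow_mul,
          Real.sqrt_sq (by positivity), div_pow, one_pow]
      calc (1:ℝ)/2^(n+1) = Real.sqrt (((1:ℝ)/4)^(n+1)) := hb.symm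
        _ ≤ Real.sqrt (t - s) := Real.sqrt_le_sqrt ha
    have hp2 : (0:ℝ) < 2^n := by positivity
    calc ‖f t - f s‖ ≤ 2 / 2 ^ n * Real.sqrt 2 := hcore
      _ ≤ 2 / 2 ^ n * (3/2) := by
          apply mul_le_mul_of_nonneg_left hrt2 (by positivity)
      _ = 6 * (1/2^(n+1)) := by rw [pow_succ]; field_simp; ring
      _ ≤ 6 * Real.sqrt (t - s) := by linarith
  · -- big gap: use n = 1
    have hps := hmem 1 le_rfl s hs
    have hpt := hmem 1 le_rfl t ht
    have hab : ∀ a b : Fin (2^1), |((a:ℕ):ℤ) - ((b:ℕ):ℤ)| ≤ 1 := by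
      intro a b
      have h1 := a.isLt
      have h2 := b.isLt
      simp only [pow_one] at h1 h2
      rw [abs_le]
      omega
    have hna := sq_dist hpt hps (hab _ _) (hab _ _)
    have hs2 : (1:ℝ)/2 ≤ Real.sqrt (t - s) := by
      have h1 : Real.sqrt (1/4 : ℝ) ≤ Real.sqrt (t - s) := Real.sqrt_le_sqrt hbig.le
      have h2 : Real.sqrt ((1:ℝ)/4) = 1/2 := by
        rw [show (1:ℝ)/4 = ((1:ℝ)/2)^2 by norm_num, Real.sqrt_sq (by norm_num)]
      linarith
    have he : (2:ℝ)/2^1 = 1 := by norm_num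
    rw [he, one_mul] at hna
    linarith
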